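/- The finite multiset functor ! on Rel, sending a set A to the set of finite multisets over A and a relation f : A → B to !f = {([a₁,…,aₙ],[b₁,…,bₙ]) | ∀i, (aᵢ,bᵢ) ∈ f}, is a functor: it preserves identities and composition of relations. -/

import Mathlib

/-- Binary relations between sets, as morphisms of the category `Rel`. -/
abbrev Rel' (A B : Type) := Set (A × B)

/-- Relational composition (diagrammatic order). -/
def rcomp {A B C : Type} (f : Rel' A B) (g : Rel' B C) : Rel' A C :=
  {p | ∃ b, (p.1, b) ∈ f ∧ (b, p.2) ∈ g}

/-- The identity relation. -/
def rid (A : Type) : Rel' A A := {p | p.1 = p.2}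

/-- The action of the finite multiset functor `!` on a relation `f : A → B`:
`!f` relates `[a₁,…,aₙ]` to `[b₁,…,bₙ]` when there is a matching pairing each `aᵢ`
with `bᵢ` such that `(aᵢ,bᵢ) ∈ f`. -/
def bangRel {A B : Type} (f : Rel' A B) : Rel' (Multiset A) (Multiset B) :=
  {p | ∃ l : List (A × B), (∀ q ∈ l, q ∈ f) ∧
        p.1 = ↑(l.map Prod.fst) ∧ p.2 = ↑(l.map Prod.snd)}

open Classical in
lemma bang_zip {A B C : Type} : ∀ (l₁ : List (A × B)) (l₂ : List (B × C)),
    (↑(l₁.map Prod.snd) : Multiset B) = ↑(l₂.map Prod.fst) →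
    ∃ l : List (A × B × C),
      (↑(l.map (fun q => (q.1, q.2.1))) : Multiset (A × B)) = ↑l₁ ∧
      (↑(l.map Prod.snd) : Multiset (B × C)) = ↑l₂ := by
  intro l₁
  induction l₁ with
  | nil =>
    intro l₂ h
    have : l₂.map Prod.fst = [] := by
      have := Multiset.coe_eq_coe.mp h
      simpa using this.symm.length_eq
    have hl₂ : l₂ = [] := by simpa using congrArg List.length this
    exact ⟨[], by simp, by simp [hl₂]⟩
  | cons ab l₁ ih =>
    intro l₂ h
    obtain ⟨a, b⟩ := ab
    have hb : b ∈ l₂.map Prod.fst := by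
      have : b ∈ (↑(l₂.map Prod.fst) : Multiset B) := by
        rw [← h]; simp
      simpa using this
    obtain ⟨p, hp, hpb⟩ := List.mem_map.mp hb
    obtain ⟨l₂', hperm⟩ : ∃ l₂', List.Perm l₂ (p :: l₂') := ⟨_, List.perm_cons_erase hp⟩
    have h2 : (↑(l₂.map Prod.fst) : Multiset B)
        = b ::ₘ ↑((l₂').map Prod.fst) := by
      calc (↑(l₂.map Prod.fst) : Multiset B)
          = ↑((p :: l₂').map Prod.fst) :=
            Multiset.coe_eq_coe.mpr (hperm.map Prod.fst)
        _ = b ::ₘ ↑((l₂').map Prod.fst) := by simp [hpb]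
    have h3 : (↑(l₁.map Prod.snd) : Multiset B) = ↑((l₂').map Prod.fst) := by
      have : (b ::ₘ ↑(l₁.map Prod.snd) : Multiset B)
          = b ::ₘ ↑((l₂').map Prod.fst) := by
        simpa [h2] using h
      exact (Multiset.cons_inj_right b).mp this
    obtain ⟨l, hl1, hl2⟩ := ih (l₂') h3
    refine ⟨(a, b, p.2) :: l, ?_, ?_⟩
    · simpa using congrArg (fun s => (a, b) ::ₘ s) hl1
    · have : ((b, p.2) ::ₘ ↑(l.map Prod.snd) : Multiset (B × C))
          = (b, p.2) ::ₘ ↑(l₂') := congrArg _ hl2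
      have hpeq : (b, p.2) = p := by
        cases p; simp_all
      calc (↑(((a, b, p.2) :: l).map Prod.snd) : Multiset (B × C))
          = (b, p.2) ::ₘ ↑(l.map Prod.snd) := by simp
        _ = p ::ₘ ↑(l₂') := by rw [hpeq, hl2]
        _ = ↑l₂ := (Multiset.coe_eq_coe.mpr hperm).symm

/-- The finite multiset functor `!` on `Rel` preserves identities and
composition of relations, i.e. it is a functor. -/
theorem bang_is_functor :
    (∀ A : Type, bangRel (rid A) = rid (Multiset A)) ∧
    (∀ (A B C : Type) (f : Rel' A B) (g : Rel' B C),
      bangRel (rcomp f g) = rcomp (bangRel f) (bangRel g)) := by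
  constructor
  · intro A
    ext p
    constructor
    · rintro ⟨l, hl, h1, h2⟩
      show p.1 = p.2
      rw [h1, h2]
      congr 1
      exact List.map_congr_left fun q hq => hl q hq
    · intro hp
      have hp : p.1 = p.2 := hp
      refine ⟨p.1.toList.map (fun a => (a, a)), ?_, ?_, ?_⟩
      · rintro ⟨x, y⟩ hq
        simp only [List.mem_map] at hq
        obtain ⟨a, _, ha⟩ := hq
        cases ha
        rfl
      · simp [List.map_map, Function.comp_def]
      · rw [hp]; simp [List.map_map, Function.comp_def]
  · intro A B C f g
    ext p
    constructor
    · rintro ⟨l, hl, h1, h2⟩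
      refine ⟨↑(l.attach.map (fun q => Classical.choose (hl q.1 q.2))), ?_, ?_⟩
      · refine ⟨l.attach.map (fun q => (q.1.1, Classical.choose (hl q.1 q.2))), ?_, ?_, ?_⟩
        · rintro q hq
          simp only [List.mem_map] at hq
          obtain ⟨r, _, hr⟩ := hq
          cases hr
          exact (Classical.choose_spec (hl r.1 r.2)).1
        · rw [h1]
          simp [List.map_map, Function.comp_def, List.attach_map_val]
        · simp [List.map_map, Function.comp_def, List.attach_map_val]
      · refine ⟨l.attach.map (fun q => (Classical.choose (hl q.1 q.2), q.1.2)), ?_, ?_, ?_⟩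
        · rintro q hq
          simp only [List.mem_map] at hq
          obtain ⟨r, _, hr⟩ := hq
          cases hr
          exact (Classical.choose_spec (hl r.1 r.2)).2
        · simp [List.map_map, Function.comp_def, List.attach_map_val]
        · rw [h2]
          simp [List.map_map, Function.comp_def, List.attach_map_val]
    · rintro ⟨m, ⟨l₁, hl₁, h11, h12⟩, ⟨l₂, hl₂, h21, h22⟩⟩
      have hmid : (↑(l₁.map Prod.snd) : Multiset B) = ↑(l₂.map Prod.fst) := by
        rw [← h12, ← h21]
      obtain ⟨l, hL1, hL2⟩ := bang_zip l₁ l₂ hmid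
      refine ⟨l.map (fun q => (q.1, q.2.2)), ?_, ?_, ?_⟩
      · rintro q hq
        simp only [List.mem_map] at hq
        obtain ⟨r, hr, hrq⟩ := hq
        cases hrq
        refine ⟨r.2.1, ?_, ?_⟩
        · have : (r.1, r.2.1) ∈ (↑(l.map (fun q => (q.1, q.2.1))) : Multiset (A × B)) := by
            simp only [Multiset.mem_coe, List.mem_map]
            exact ⟨r, hr, rfl⟩
          rw [hL1] at this
          exact hl₁ _ (by simpa using this)
        · have : r.2 ∈ (↑(l.map Prod.snd) : Multiset (B × C)) := by
            simp only [Multiset.mem_coe, List.mem_map]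
            exact ⟨r, hr, rfl⟩
          rw [hL2] at this
          have := hl₂ _ (by simpa using this)
          simpa using this
      · rw [h11]
        have := congrArg (Multiset.map Prod.fst) hL1
        simp only [Multiset.map_coe, List.map_map, Function.comp_def] at this ⊢
        exact this.symm
      · rw [h22]
        have := congrArg (Multiset.map Prod.snd) hL2
        simp only [Multiset.map_coe, List.map_map, Function.comp_def] at this ⊢
        exact this.symm
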